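/- Let U be a finite set with |U| = S, let F be a nonempty family of subsets of U, and let K = |⋂_{A∈F} A|. Then there exist (not necessarily distinct) sets A_1, …, A_{S−K+1} ∈ F such that A_1 ∩ ⋯ ∩ A_{S−K+1} = ⋂_{A∈F} A. (This is the witnessing lemma behind the paper's guess-and-check algorithms for IAR semantics: the intersection of all repaired graphs, which are subsets of G ∪ H, is already realized as the intersection of S − K + 1 of them.) -/

import Mathlib

/-- Witnessing lemma for intersections of families of subsets of a finite set:
if |U| = S, F is a nonempty family of subsets of U, and the intersection of all
members of F has cardinality K, then some S − K + 1 (not necessarily distinct)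
members of F already realize the full intersection. -/
theorem intersection_realized_by_few_witnesses
    {α : Type*} (U : Set α) (hU : U.Finite) (S : ℕ) (hS : U.ncard = S)
    (F : Set (Set α)) (hne : F.Nonempty) (hsub : ∀ A ∈ F, A ⊆ U)
    (K : ℕ) (hK : (⋂₀ F).ncard = K) :
    ∃ f : Fin (S - K + 1) → Set α,
      (∀ i, f i ∈ F) ∧ (⋂ i, f i) = ⋂₀ F := by
  obtain ⟨A0, hA0⟩ := hne
  have hIsub : ⋂₀ F ⊆ U := (Set.sInter_subset_of_mem hA0).trans (hsub A0 hA0)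
  set T := U \ ⋂₀ F with hTdef
  have hTfin : T.Finite := hU.diff
  have hchoice : ∀ x ∈ T, ∃ A ∈ F, x ∉ A := by
    intro x hx
    have hx2 := hx.2
    simpa [Set.mem_sInter, not_forall] using hx2
  choose g hgF hgx using hchoice
  have hm : hTfin.toFinset.card = S - K := by
    rw [← Set.ncard_eq_toFinset_card T hTfin, ← hS, ← hK]
    exact Set.ncard_diff hIsub (hU.subset hIsub)
  let e := hTfin.toFinset.equivFin
  have hmemT : ∀ (h : ℕ) (hh : h < hTfin.toFinset.card),
      ((e.symm ⟨h, hh⟩ : hTfin.toFinset) : α) ∈ T := by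
    intro h hh
    have := (e.symm ⟨h, hh⟩).2
    rwa [Set.Finite.mem_toFinset] at this
  refine ⟨fun i => if h : (i : ℕ) < hTfin.toFinset.card then
      g _ (hmemT i h) else A0, ?_, ?_⟩
  · intro i
    by_cases h : (i : ℕ) < hTfin.toFinset.card
    · simp only [dif_pos h]; exact hgF _ _
    · simp only [dif_neg h]; exact hA0
  · apply Set.Subset.antisymm
    · intro x hx
      simp only [Set.mem_iInter] at hx
      by_contra hxI
      have hxA0 : x ∈ A0 := by
        have hlast : ¬ ((⟨S - K, Nat.lt_succ_self _⟩ : Fin (S - K + 1)) : ℕ)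
            < hTfin.toFinset.card := by simp [hm]
        have := hx ⟨S - K, Nat.lt_succ_self _⟩
        rwa [dif_neg hlast] at this
      have hxT : x ∈ T := ⟨hsub A0 hA0 hxA0, hxI⟩
      have hxT' : x ∈ hTfin.toFinset := hTfin.mem_toFinset.2 hxT
      have hjlt : ((e ⟨x, hxT'⟩ : Fin hTfin.toFinset.card) : ℕ) < S - K + 1 := by
        have := (e ⟨x, hxT'⟩).2; omega
      have hjlt2 : ((⟨(e ⟨x, hxT'⟩ : Fin hTfin.toFinset.card), hjlt⟩ :
          Fin (S - K + 1)) : ℕ) < hTfin.toFinset.card := (e ⟨x, hxT'⟩).2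
      have hfx := hx ⟨(e ⟨x, hxT'⟩ : Fin hTfin.toFinset.card), hjlt⟩
      rw [dif_pos hjlt2] at hfx
      have hnot := hgx _ (hmemT _ hjlt2)
      have hval : ((e.symm ⟨((⟨(e ⟨x, hxT'⟩ : Fin hTfin.toFinset.card), hjlt⟩ :
          Fin (S - K + 1)) : ℕ), hjlt2⟩ : hTfin.toFinset) : α) = x := by
        have h1 : (⟨((⟨(e ⟨x, hxT'⟩ : Fin hTfin.toFinset.card), hjlt⟩ :
            Fin (S - K + 1)) : ℕ), hjlt2⟩ : Fin hTfin.toFinset.card) = e ⟨x, hxT'⟩ := by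
          ext; rfl
        rw [h1, Equiv.symm_apply_apply]
      exact hnot (Set.mem_of_eq_of_mem hval hfx)
    · intro x hx
      simp only [Set.mem_iInter]
      intro i
      by_cases h : (i : ℕ) < hTfin.toFinset.card
      · rw [dif_pos h]; exact hx _ (hgF _ _)
      · rw [dif_neg h]; exact hx _ hA0
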